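/- Let N be a sound deterministic negotiation over agent set A, and let B, C partition A. Let x1, x2 be reachable markings such that x1(p) = x2(p) for every p ∈ B, and every atom enabled at x1 or at x2 has at least one party in B and at least one party in C. Then x1(p) = x2(p) for every p ∈ C, i.e., x1 = x2. -/

import Mathlib

universe u v w

/-- A (distributed) negotiation over a finite set of agents, a type of atoms and a type
of result names.  `atoms` is the finite set of negotiation atoms, `n0`/`nf` the initial
and final atoms, `parties n` the parties of atom `n`, `results n` its finite set of
results, and `trans n p r` the set of atoms agent `p` is ready to engage in after the
outcome `(n, r)`. -/
structure Negotiation (Agent : Type u) (Atom : Type v) (Res : Type w)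
    [Fintype Agent] [DecidableEq Agent] [DecidableEq Atom] [DecidableEq Res] where
  atoms : Finset Atom
  n0 : Atom
  nf : Atom
  parties : Atom → Finset Agent
  results : Atom → Finset Res
  trans : Atom → Agent → Res → Finset Atom
  n0_mem : n0 ∈ atoms
  nf_mem : nf ∈ atoms
  parties_nonempty : ∀ n ∈ atoms, (parties n).Nonempty
  results_nonempty : ∀ n ∈ atoms, (results n).Nonempty
  parties_n0 : parties n0 = Finset.univ
  parties_nf : parties nf = Finset.univ
  trans_sub : ∀ n ∈ atoms, ∀ p ∈ parties n, ∀ r ∈ results n, trans n p r ⊆ atoms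
  trans_parties : ∀ n ∈ atoms, ∀ p ∈ parties n, ∀ r ∈ results n, ∀ n' ∈ trans n p r, p ∈ parties n'
  trans_empty_iff : ∀ n ∈ atoms, ∀ p ∈ parties n, ∀ r ∈ results n, (trans n p r = ∅ ↔ n = nf)
  on_path : ∀ n ∈ atoms,
    Relation.ReflTransGen (fun a b => ∃ p ∈ parties a, ∃ r ∈ results a, b ∈ trans a p r) n0 n ∧
    Relation.ReflTransGen (fun a b => ∃ p ∈ parties a, ∃ r ∈ results a, b ∈ trans a p r) n nf

namespace Negotiation

variable {Agent : Type u} {Atom : Type v} {Res : Type w}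
variable [Fintype Agent] [DecidableEq Agent] [DecidableEq Atom] [DecidableEq Res]

/-- A marking assigns to each agent the set of atoms it is ready to engage in. -/
def Marking (Agent : Type u) (Atom : Type v) : Type (max u v) := Agent → Finset Atom

/-- A marking enables an atom if every party of the atom is ready to engage in it. -/
def Enables (N : Negotiation Agent Atom Res) (x : Marking Agent Atom) (n : Atom) : Prop :=
  n ∈ N.atoms ∧ ∀ p ∈ N.parties n, n ∈ x p

/-- Small step: the occurrence of the outcome `o = (n, r)` from marking `x` yields `y`. -/
def StepTo (N : Negotiation Agent Atom Res) (x : Marking Agent Atom) (o : Atom × Res)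
    (y : Marking Agent Atom) : Prop :=
  N.Enables x o.1 ∧ o.2 ∈ N.results o.1 ∧
    ∀ p, y p = if p ∈ N.parties o.1 then N.trans o.1 p o.2 else x p

/-- Occurrence sequences: `Seq N x σ y` means the finite sequence of outcomes `σ`
can occur from marking `x` and leads to marking `y`. -/
inductive Seq (N : Negotiation Agent Atom Res) :
    Marking Agent Atom → List (Atom × Res) → Marking Agent Atom → Prop
  | nil (x : Marking Agent Atom) : Seq N x [] x
  | cons {x y z : Marking Agent Atom} {o : Atom × Res} {σ : List (Atom × Res)} :
      N.StepTo x o y → Seq N y σ z → Seq N x (o :: σ) z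

/-- The initial marking. -/
def x0 (N : Negotiation Agent Atom Res) : Marking Agent Atom := fun _ => {N.n0}

/-- The final marking. -/
def xf (_N : Negotiation Agent Atom Res) : Marking Agent Atom := fun _ => ∅

/-- A marking is reachable if some occurrence sequence leads to it from the initial marking. -/
def Reachable (N : Negotiation Agent Atom Res) (x : Marking Agent Atom) : Prop :=
  ∃ σ, N.Seq N.x0 σ x

/-- A large step is an occurrence sequence from the initial to the final marking. -/
def LargeStep (N : Negotiation Agent Atom Res) (σ : List (Atom × Res)) : Prop :=
  N.Seq N.x0 σ N.xf

/-- Soundness: every atom is enabled at some reachable marking, and from every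
reachable marking the final marking is reachable. -/
def Sound (N : Negotiation Agent Atom Res) : Prop :=
  (∀ n ∈ N.atoms, ∃ x, N.Reachable x ∧ N.Enables x n) ∧
  (∀ x, N.Reachable x → ∃ τ, N.Seq x τ N.xf)

/-- An agent is deterministic if it is never ready to engage in more than one atom. -/
def DeterministicAgent (N : Negotiation Agent Atom Res) (p : Agent) : Prop :=
  ∀ n ∈ N.atoms, n ≠ N.nf → p ∈ N.parties n → ∀ r ∈ N.results n, ∃ n', N.trans n p r = {n'}

/-- A negotiation is deterministic if all its agents are. -/
def Deterministic (N : Negotiation Agent Atom Res) : Prop := ∀ p, N.DeterministicAgent p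

/-- Weak determinism: for every `(n, p, r)` there is a deterministic agent which is a
party of every atom in `trans n p r`. -/
def WeaklyDeterministic (N : Negotiation Agent Atom Res) : Prop :=
  ∀ n ∈ N.atoms, ∀ p ∈ N.parties n, ∀ r ∈ N.results n,
    ∃ b, N.DeterministicAgent b ∧ ∀ n' ∈ N.trans n p r, b ∈ N.parties n'

/-- The edge relation of the graph of a negotiation. -/
def Edge (N : Negotiation Agent Atom Res) (a b : Atom) : Prop :=
  a ∈ N.atoms ∧ b ∈ N.atoms ∧ ∃ p ∈ N.parties a, ∃ r ∈ N.results a, b ∈ N.trans a p r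

/-- A negotiation is acyclic if its graph has no cycles. -/
def Acyclic (N : Negotiation Agent Atom Res) : Prop :=
  ∀ n, ¬ Relation.TransGen N.Edge n n

/-- The arc `(n, p, r, n')` occurs in the occurrence sequence `σ`. -/
def ArcOccursIn (N : Negotiation Agent Atom Res) (n : Atom) (p : Agent) (r : Res) (n' : Atom)
    (σ : List (Atom × Res)) : Prop :=
  ∃ (σ1 σ2 σ3 : List (Atom × Res)) (r' : Res), r' ∈ N.results n' ∧
    σ = σ1 ++ (n, r) :: σ2 ++ (n', r') :: σ3 ∧ ∀ o ∈ σ2, p ∉ N.parties o.1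

/-- The outcome `(n, r)` unconditionally enables the atom `n'`. -/
def UncondEnables (N : Negotiation Agent Atom Res) (n : Atom) (r : Res) (n' : Atom) : Prop :=
  N.parties n' ⊆ N.parties n ∧ ∀ p ∈ N.parties n', N.trans n p r = {n'}

/-- The outcome `(n, r)` has exclusive access to the atom `n'`. -/
def ExclusiveAccess (N : Negotiation Agent Atom Res) (n : Atom) (r : Res) (n' : Atom) : Prop :=
  ∀ p ∈ N.parties n', n' ∈ N.trans n p r ∧
    ∀ m ∈ N.atoms, ∀ r'' ∈ N.results m, (m, r'') ≠ (n, r) → n' ∉ N.trans m p r''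

/-- The outcome `(m, r'')` commits to the atom `n'`. -/
def CommitsTo (N : Negotiation Agent Atom Res) (m : Atom) (r'' : Res) (n' : Atom) : Prop :=
  ∃ p ∈ N.parties m, N.trans m p r'' = {n'}

/-- The merge rule: two results of a non-final atom with identical transition functions
are merged into a fresh result. -/
def MergeRule (N1 N2 : Negotiation Agent Atom Res) : Prop :=
  ∃ (n : Atom) (r1 r2 r : Res), n ∈ N1.atoms ∧ n ≠ N1.nf ∧
    r1 ∈ N1.results n ∧ r2 ∈ N1.results n ∧ r1 ≠ r2 ∧
    (∀ p ∈ N1.parties n, N1.trans n p r1 = N1.trans n p r2) ∧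
    r ∉ N1.results n ∧
    N2.atoms = N1.atoms ∧ N2.n0 = N1.n0 ∧ N2.nf = N1.nf ∧ N2.parties = N1.parties ∧
    N2.results n = insert r (((N1.results n).erase r1).erase r2) ∧
    (∀ m, m ≠ n → N2.results m = N1.results m) ∧
    (∀ p, N2.trans n p r = N1.trans n p r1) ∧
    (∀ p, ∀ r'' ∈ ((N1.results n).erase r1).erase r2, N2.trans n p r'' = N1.trans n p r'') ∧
    (∀ m, m ≠ n → N2.trans m = N1.trans m)

/-- The iteration rule: a result after which all parties return to the same atom is removed. -/
def IterationRule (N1 N2 : Negotiation Agent Atom Res) : Prop :=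
  ∃ (n : Atom) (r : Res), n ∈ N1.atoms ∧ r ∈ N1.results n ∧
    (∀ p ∈ N1.parties n, N1.trans n p r = {n}) ∧
    N2.atoms = N1.atoms ∧ N2.n0 = N1.n0 ∧ N2.nf = N1.nf ∧ N2.parties = N1.parties ∧
    N2.results n = (N1.results n).erase r ∧
    (∀ m, m ≠ n → N2.results m = N1.results m) ∧
    N2.trans = N1.trans

/-- The useless arc rule: under the guard consisting of three distinct arcs
`(n,p,r,n')`, `(n,p,r,n'')`, `(n,q,r,n')` with `trans n q r = {n'}`, the arc
`(n,p,r,n'')` is removed (and the result is again a negotiation, since `N2` is one). -/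
def UselessArcRule (N1 N2 : Negotiation Agent Atom Res) : Prop :=
  ∃ (n : Atom) (p q : Agent) (r : Res) (n' n'' : Atom),
    n ∈ N1.atoms ∧ p ∈ N1.parties n ∧ q ∈ N1.parties n ∧ r ∈ N1.results n ∧
    p ≠ q ∧ n' ≠ n'' ∧
    n' ∈ N1.trans n p r ∧ n'' ∈ N1.trans n p r ∧ N1.trans n q r = {n'} ∧
    N2.atoms = N1.atoms ∧ N2.n0 = N1.n0 ∧ N2.nf = N1.nf ∧
    N2.parties = N1.parties ∧ N2.results = N1.results ∧
    N2.trans n p r = (N1.trans n p r).erase n'' ∧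
    (∀ (m : Atom) (p' : Agent) (r' : Res), (m, p', r') ≠ (n, p, r) →
      N2.trans m p' r' = N1.trans m p' r')

/-- The shortcut rule applied to the outcome `(n, r)` which unconditionally enables `n'`,
using `f` to produce the fresh result names `r'_s = f r'`. -/
def ShortcutRuleAt (N1 N2 : Negotiation Agent Atom Res) (n : Atom) (r : Res) (n' : Atom)
    (f : Res → Res) : Prop :=
  n ∈ N1.atoms ∧ n' ∈ N1.atoms ∧ r ∈ N1.results n ∧ n' ≠ n ∧
  N1.UncondEnables n r n' ∧
  ((n' ≠ N1.nf ∧ N1.ExclusiveAccess n r n') ∨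
   (n' ≠ N1.nf ∧ ∃ (m : Atom) (r'' : Res), m ∈ N1.atoms ∧ r'' ∈ N1.results m ∧
      (m, r'') ≠ (n, r) ∧ N1.CommitsTo m r'' n') ∨
   (n' = N1.nf ∧ N1.ExclusiveAccess n r n' ∧ N1.results n = {r})) ∧
  Set.InjOn f ↑(N1.results n') ∧ (∀ r' ∈ N1.results n', f r' ∉ N1.results n) ∧
  N2.n0 = N1.n0 ∧ N2.parties = N1.parties ∧
  N2.results n = ((N1.results n).erase r) ∪ (N1.results n').image f ∧
  (∀ m, m ≠ n → N2.results m = N1.results m) ∧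
  (∀ r' ∈ N1.results n', ∀ p ∈ N1.parties n', N2.trans n p (f r') = N1.trans n' p r') ∧
  (∀ r' ∈ N1.results n', ∀ p ∈ N1.parties n, p ∉ N1.parties n' →
      N2.trans n p (f r') = N1.trans n p r) ∧
  (∀ r'' ∈ (N1.results n).erase r, ∀ p, N2.trans n p r'' = N1.trans n p r'') ∧
  (∀ m, m ≠ n → N2.trans m = N1.trans m) ∧
  (N1.ExclusiveAccess n r n' → N2.atoms = N1.atoms.erase n') ∧
  (¬ N1.ExclusiveAccess n r n' → N2.atoms = N1.atoms) ∧
  ((n' = N1.nf ∧ N1.ExclusiveAccess n r n') → N2.nf = n) ∧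
  (¬ (n' = N1.nf ∧ N1.ExclusiveAccess n r n') → N2.nf = N1.nf)

/-- The shortcut rule as a relation between negotiations. -/
def ShortcutRule (N1 N2 : Negotiation Agent Atom Res) : Prop :=
  ∃ n r n' f, ShortcutRuleAt N1 N2 n r n' f

/-- The deterministic shortcut rule: the shortcut rule restricted to the case where the
unconditionally enabled atom has at most one result. -/
def DShortcutRule (N1 N2 : Negotiation Agent Atom Res) : Prop :=
  ∃ n r n' f, ShortcutRuleAt N1 N2 n r n' f ∧ (N1.results n').card ≤ 1

/-- A negotiation is irreducible if none of the four reduction rules is applicable. -/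
def Irreducible (N : Negotiation Agent Atom Res) : Prop :=
  ∀ N' : Negotiation Agent Atom Res,
    ¬ (MergeRule N N' ∨ IterationRule N N' ∨ UselessArcRule N N' ∨ ShortcutRule N N')

/-- The marking `x_n` that puts exactly the parties of `n` on `n`. -/
def xAt (N : Negotiation Agent Atom Res) (n : Atom) : Marking Agent Atom :=
  fun p => if p ∈ N.parties n then {n} else ∅

/-- An `(n, r)`-sequence: a finite occurrence sequence from `x_n` starting with the
outcome `(n, r)` all of whose atoms have their parties included in the parties of `n`. -/
def NRSeq (N : Negotiation Agent Atom Res) (n : Atom) (r : Res)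
    (σ : List (Atom × Res)) : Prop :=
  (∃ τ, σ = (n, r) :: τ) ∧ (∃ y, N.Seq (N.xAt n) σ y) ∧
    ∀ o ∈ σ, N.parties o.1 ⊆ N.parties n

/-- The index of the outcome `(n, r)`: the length of a longest (maximal) `(n,r)`-sequence
minus one. -/
noncomputable def outcomeIndex (N : Negotiation Agent Atom Res) (n : Atom) (r : Res) : ℕ :=
  sSup {l : ℕ | ∃ σ, N.NRSeq n r σ ∧ σ.length = l} - 1

/-- The index of a negotiation: the sum of the indices of all non-final outcomes. -/
noncomputable def negIndex (N : Negotiation Agent Atom Res) : ℕ :=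
  (N.atoms.filter (fun n => n ≠ N.nf)).sum
    (fun n => (N.results n).sum (fun r => N.outcomeIndex n r))

/-- An `n`-sequence: an `(n, r)`-sequence for some result `r` of `n`. -/
def NSeq (N : Negotiation Agent Atom Res) (n : Atom) (σ : List (Atom × Res)) : Prop :=
  (∃ r ∈ N.results n, ∃ τ, σ = (n, r) :: τ) ∧ (∃ y, N.Seq (N.xAt n) σ y) ∧
    ∀ o ∈ σ, N.parties o.1 ⊆ N.parties n

/-- A maximal `n`-sequence: it cannot be extended to a longer `n`-sequence. -/
def MaximalNSeq (N : Negotiation Agent Atom Res) (n : Atom) (σ : List (Atom × Res)) : Prop :=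
  N.NSeq n σ ∧ ∀ o : Atom × Res, ¬ N.NSeq n (σ ++ [o])

/-- An outcome `(n, r)` is uniform: all parties of `n` move to the same set of atoms. -/
def Uniform (N : Negotiation Agent Atom Res) (n : Atom) (r : Res) : Prop :=
  ∀ p ∈ N.parties n, ∀ q ∈ N.parties n, N.trans n p r = N.trans n q r

/-- A replication: all atoms have the same parties and all outcomes are uniform. -/
def Replication (N : Negotiation Agent Atom Res) : Prop :=
  (∀ n ∈ N.atoms, ∀ m ∈ N.atoms, N.parties n = N.parties m) ∧
  (∀ n ∈ N.atoms, ∀ r ∈ N.results n, N.Uniform n r)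

/-- A path of a negotiation: a list of triples `(nᵢ, pᵢ, rᵢ)` with `nᵢ₊₁ ∈ trans nᵢ pᵢ rᵢ`. -/
def IsPath (N : Negotiation Agent Atom Res) (π : List (Atom × Agent × Res)) : Prop :=
  (∀ t ∈ π, t.1 ∈ N.atoms ∧ t.2.1 ∈ N.parties t.1 ∧ t.2.2 ∈ N.results t.1) ∧
  π.Chain' (fun s t => t.1 ∈ N.trans s.1 s.2.1 s.2.2)

/-- A loop: a nonempty sequence of outcomes leading from some reachable marking back to itself. -/
def IsLoop (N : Negotiation Agent Atom Res) (σ : List (Atom × Res)) : Prop :=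
  σ ≠ [] ∧ ∃ x, N.Reachable x ∧ N.Seq x σ x

end Negotiation

namespace Negotiation
variable {Agent : Type u} {Atom : Type v} {Res : Type w}
variable [Fintype Agent] [DecidableEq Agent] [DecidableEq Atom] [DecidableEq Res]

-- ===================== auxiliary development =====================
variable {N : Negotiation Agent Atom Res}

/-- The marking obtained by firing outcome `o` from `x`. -/
def fire (N : Negotiation Agent Atom Res) (x : Marking Agent Atom) (o : Atom × Res) :
    Marking Agent Atom := fun p => if p ∈ N.parties o.1 then N.trans o.1 p o.2 else x p

lemma StepTo.pos {x y : Marking Agent Atom} {o : Atom × Res} (st : N.StepTo x o y)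
    {p : Agent} (hp : p ∈ N.parties o.1) : y p = N.trans o.1 p o.2 := by
  rw [st.2.2 p, if_pos hp]

lemma StepTo.neg {x y : Marking Agent Atom} {o : Atom × Res} (st : N.StepTo x o y)
    {p : Agent} (hp : p ∉ N.parties o.1) : y p = x p := by
  rw [st.2.2 p, if_neg hp]

lemma stepTo_fire {x : Marking Agent Atom} {e : Atom} {r : Res}
    (he : N.Enables x e) (hr : r ∈ N.results e) :
    N.StepTo x (e, r) (N.fire x (e, r)) := ⟨he, hr, fun _ => rfl⟩

lemma seq_append : ∀ {σ₁ : List (Atom × Res)} {x y : Marking Agent Atom},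
    N.Seq x σ₁ y → ∀ {σ₂ z}, N.Seq y σ₂ z → N.Seq x (σ₁ ++ σ₂) z := by
  intro σ₁ x y h₁
  induction h₁ with
  | nil => intro σ₂ z h₂; exact h₂
  | cons st h ih => intro σ₂ z h₂; exact Seq.cons st (ih h₂)

lemma reachable_seq {x y : Marking Agent Atom} {σ : List (Atom × Res)}
    (hx : N.Reachable x) (h : N.Seq x σ y) : N.Reachable y := by
  obtain ⟨σ₀, h₀⟩ := hx
  exact ⟨σ₀ ++ σ, seq_append h₀ h⟩

lemma reachable_step {x y : Marking Agent Atom} {o : Atom × Res}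
    (hx : N.Reachable x) (h : N.StepTo x o y) : N.Reachable y :=
  reachable_seq hx (Seq.cons h (Seq.nil y))

lemma not_enables_xf {e : Atom} : ¬ N.Enables N.xf e := by
  rintro ⟨hmem, hall⟩
  obtain ⟨p, hp⟩ := N.parties_nonempty e hmem
  exact absurd (hall p hp) (Finset.notMem_empty _)

lemma step_sing (hd : N.Deterministic) {x y : Marking Agent Atom} {o : Atom × Res}
    (st : N.StepTo x o y) (hx : ∀ p, x p = ∅ ∨ ∃ n, x p = {n}) :
    ∀ p, y p = ∅ ∨ ∃ n, y p = {n} := by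
  intro p
  by_cases hp : p ∈ N.parties o.1
  · rw [st.pos hp]
    by_cases hnf : o.1 = N.nf
    · exact Or.inl ((N.trans_empty_iff o.1 st.1.1 p hp o.2 st.2.1).mpr hnf)
    · exact Or.inr (hd p o.1 st.1.1 hnf hp o.2 st.2.1)
  · rw [st.neg hp]; exact hx p

lemma seq_sing (hd : N.Deterministic) : ∀ {σ : List (Atom × Res)} {x y : Marking Agent Atom},
    N.Seq x σ y → (∀ p, x p = ∅ ∨ ∃ n, x p = {n}) → ∀ p, y p = ∅ ∨ ∃ n, y p = {n} := by
  intro σ x y h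
  induction h with
  | nil => exact id
  | cons st h ih => intro hx; exact ih (step_sing hd st hx)

lemma reachable_sing (hd : N.Deterministic) {x : Marking Agent Atom} (hx : N.Reachable x) :
    ∀ p, x p = ∅ ∨ ∃ n, x p = {n} := by
  obtain ⟨σ, h⟩ := hx
  exact seq_sing hd h (fun p => Or.inr ⟨N.n0, rfl⟩)

lemma enab_pos (hd : N.Deterministic) {x : Marking Agent Atom} {e : Atom}
    (hx : N.Reachable x) (he : N.Enables x e) {p : Agent} (hp : p ∈ N.parties e) :
    x p = {e} := by
  rcases reachable_sing hd hx p with h0 | ⟨n, hn⟩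
  · exact absurd (he.2 p hp) (by rw [h0]; exact Finset.notMem_empty _)
  · have := he.2 p hp
    rw [hn] at this ⊢
    rw [Finset.mem_singleton.mp this]

lemma step_ne {x y : Marking Agent Atom} {o : Atom × Res}
    (st : N.StepTo x o y) (hx : ∀ p, x p ≠ ∅) : y = N.xf ∨ ∀ p, y p ≠ ∅ := by
  by_cases hnf : o.1 = N.nf
  · left
    funext p
    have hp : p ∈ N.parties o.1 := by
      rw [hnf, N.parties_nf]; exact Finset.mem_univ p
    rw [st.pos hp]
    exact (N.trans_empty_iff o.1 st.1.1 p hp o.2 st.2.1).mpr hnf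
  · right
    intro p
    by_cases hp : p ∈ N.parties o.1
    · rw [st.pos hp]
      exact fun h => hnf ((N.trans_empty_iff o.1 st.1.1 p hp o.2 st.2.1).mp h)
    · rw [st.neg hp]; exact hx p

lemma seq_ne : ∀ {σ : List (Atom × Res)} {x y : Marking Agent Atom},
    N.Seq x σ y → (x = N.xf ∨ ∀ p, x p ≠ ∅) → (y = N.xf ∨ ∀ p, y p ≠ ∅) := by
  intro σ x y h
  induction h with
  | nil => exact id
  | cons st h ih =>
    intro hx
    rcases hx with h0 | h0
    · subst h0; exact absurd st.1 not_enables_xf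
    · exact ih (step_ne st h0)

lemma reachable_ne {x : Marking Agent Atom} (hx : N.Reachable x) :
    x = N.xf ∨ ∀ p, x p ≠ ∅ := by
  obtain ⟨σ, h⟩ := hx
  refine seq_ne h (Or.inr fun p => ?_)
  show ({N.n0} : Finset Atom) ≠ ∅
  simp

lemma exists_enabled (hs : N.Sound) {w : Marking Agent Atom} (hw : N.Reachable w)
    (hneq : w ≠ N.xf) : ∃ e, N.Enables w e := by
  obtain ⟨τ, hτ⟩ := hs.2 w hw
  cases hτ with
  | nil => exact absurd rfl hneq
  | cons st _ => exact ⟨_, st.1⟩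

lemma freeze_agent {e : Atom} : ∀ {σ : List (Atom × Res)} {x y : Marking Agent Atom},
    N.Seq x σ y → (∀ o ∈ σ, o.1 ≠ e) → ∀ {p}, x p = {e} → y p = {e} := by
  intro σ x y h
  induction h with
  | nil => intro _ _ h; exact h
  | cons st h ih =>
    rename_i x' y' z' o σ'
    intro hne p hp
    have hni : p ∉ N.parties o.1 := by
      intro hmem
      have h2 := st.1.2 p hmem
      rw [hp] at h2
      exact hne o List.mem_cons_self (Finset.mem_singleton.mp h2)
    refine ih (fun o' ho' => hne o' (List.mem_cons_of_mem _ ho')) ?_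
    rw [st.neg hni]; exact hp

lemma must_fire {σ : List (Atom × Res)} {x : Marking Agent Atom}
    (h : N.Seq x σ N.xf) {p : Agent} {e : Atom} (hp : x p = {e}) : ∃ o ∈ σ, o.1 = e := by
  by_contra hc
  push_neg at hc
  have hxf : (∅ : Finset Atom) = {e} := freeze_agent h hc hp
  exact Finset.singleton_ne_empty e hxf.symm

lemma swap_front (hd : N.Deterministic) :
    ∀ {σ : List (Atom × Res)} {x : Marking Agent Atom} {e : Atom},
    N.Reachable x → N.Enables x e → N.Seq x σ N.xf →
    ∃ r y σ', N.StepTo x (e, r) y ∧ N.Seq y σ' N.xf ∧ σ'.length < σ.length := by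
  intro σ
  induction σ with
  | nil =>
    intro x e hx he hσ
    cases hσ
    exact absurd he not_enables_xf
  | cons o σ₁ IH =>
    intro x e hx he hσ
    obtain ⟨a, r₀⟩ := o
    cases hσ with
    | cons st hσ₁ =>
      rename_i y₁
      by_cases heq : a = e
      · subst heq
        exact ⟨r₀, y₁, σ₁, st, hσ₁, Nat.lt_succ_self _⟩
      · have hdisj : ∀ p ∈ N.parties e, p ∉ N.parties a := by
          intro p hpe hpa
          have h2 := st.1.2 p hpa
          rw [enab_pos hd hx he hpe] at h2
          exact heq (Finset.mem_singleton.mp h2)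
        have he₁ : N.Enables y₁ e := by
          refine ⟨he.1, fun p hp => ?_⟩
          rw [st.neg (hdisj p hp)]
          exact he.2 p hp
        obtain ⟨r, y₂, σ₂, st₂, hσ₂, hlt⟩ := IH (reachable_step hx st) he₁ hσ₁
        refine ⟨r, N.fire x (e, r), (a, r₀) :: σ₂, stepTo_fire he st₂.2.1, ?_, by simpa using Nat.succ_lt_succ hlt⟩
        refine Seq.cons ⟨⟨st.1.1, fun p hp => ?_⟩, st.2.1, fun p => ?_⟩ hσ₂
        · show a ∈ N.fire x (e, r) p
          have hpe : p ∉ N.parties e := fun h => hdisj p h hp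
          show a ∈ (if p ∈ N.parties e then N.trans e p r else x p)
          rw [if_neg hpe]
          exact st.1.2 p hp
        · show y₂ p = if p ∈ N.parties a then N.trans a p r₀ else N.fire x (e, r) p
          by_cases hpa : p ∈ N.parties a
          · rw [if_pos hpa, st₂.neg (fun h => hdisj p h hpa), st.pos hpa]
          · rw [if_neg hpa]
            by_cases hpe : p ∈ N.parties e
            · rw [st₂.pos hpe]
              show _ = (if p ∈ N.parties e then N.trans e p r else x p)
              rw [if_pos hpe]
            · rw [st₂.neg hpe, st.neg hpa]
              show _ = (if p ∈ N.parties e then N.trans e p r else x p)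
              rw [if_neg hpe]

lemma seq_split {Q : Atom → Prop} : ∀ {σ : List (Atom × Res)} {x y : Marking Agent Atom},
    N.Seq x σ y → (∃ o ∈ σ, Q o.1) →
    ∃ (π : List (Atom × Res)) (e : Atom) (r : Res) (ρ : List (Atom × Res)) (z₁ z₂ : Marking Agent Atom), σ = π ++ (e, r) :: ρ ∧ N.Seq x π z₁ ∧
      N.StepTo z₁ (e, r) z₂ ∧ N.Seq z₂ ρ y ∧ Q e ∧ ∀ o ∈ π, ¬ Q o.1 := by
  intro σ
  induction σ with
  | nil => intro x y _ hQ; simp at hQ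
  | cons o σ₁ IH =>
    intro x y hσ hQ
    obtain ⟨a, r₀⟩ := o
    cases hσ with
    | cons st hσ₁ =>
      rename_i y₁
      by_cases hQa : Q a
      · exact ⟨[], a, r₀, σ₁, x, y₁, rfl, Seq.nil x, st, hσ₁, hQa, by simp⟩
      · have hQ' : ∃ o ∈ σ₁, Q o.1 := by
          rcases hQ with ⟨o, ho, hQo⟩
          rcases List.mem_cons.mp ho with h | h
          · rw [h] at hQo; exact absurd hQo hQa
          · exact ⟨o, h, hQo⟩
        obtain ⟨π, e, r, ρ, z₁, z₂, hdec, hπ, hst, hρ, hQe, hπno⟩ := IH hσ₁ hQ'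
        refine ⟨(a, r₀) :: π, e, r, ρ, z₁, z₂, by rw [hdec]; simp, Seq.cons st hπ, hst, hρ, hQe, ?_⟩
        intro o ho
        rcases List.mem_cons.mp ho with h | h
        · rw [h]; exact hQa
        · exact hπno o h

/-- Restricted occurrence sequences relative to a target marking `w`: each fired atom has
no party currently agreeing with `w`. -/
inductive RSeq (N : Negotiation Agent Atom Res) (w : Marking Agent Atom) :
    Marking Agent Atom → List (Atom × Res) → Marking Agent Atom → Prop
  | nil (x : Marking Agent Atom) : RSeq N w x [] x
  | cons {x y z : Marking Agent Atom} {o : Atom × Res} {σ : List (Atom × Res)} :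
      N.StepTo x o y → (∀ p ∈ N.parties o.1, x p ≠ w p) → RSeq N w y σ z → RSeq N w x (o :: σ) z

theorem key (hs : N.Sound) (hd : N.Deterministic) :
    ∀ (n : ℕ) (x w : Marking Agent Atom) (σx : List (Atom × Res)),
      N.Reachable x → N.Reachable w → N.Seq x σx N.xf → σx.length ≤ n →
      (∀ e, N.Enables w e → ∃ q ∈ N.parties e, x q = w q) →
      (∀ p, w p = ∅ → x p = ∅) →
      ∃ σ, RSeq N w x σ w := by
  intro n
  induction n using Nat.strong_induction_on with
  | _ n IH =>
  intro x w σx hx hw hσx hlen hi hii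
  by_cases hxw : x = w
  · subst hxw; exact ⟨[], RSeq.nil x⟩
  by_cases hwxf : w = N.xf
  · have hxxf : x = N.xf := funext fun p => hii p (by rw [hwxf]; rfl)
    exact absurd (hxxf.trans hwxf.symm) hxw
  by_cases hxxf : x = N.xf
  · exfalso
    obtain ⟨e, he⟩ := exists_enabled hs hw hwxf
    obtain ⟨q, hq, hEq⟩ := hi e he
    have hmem : e ∈ w q := he.2 q hq
    rw [← hEq, hxxf] at hmem
    exact absurd hmem (Finset.notMem_empty _)
  have hne_x : ∀ p, x p ≠ ∅ := (reachable_ne hx).resolve_left hxxf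
  have hne_w : ∀ p, w p ≠ ∅ := (reachable_ne hw).resolve_left hwxf
  have hσxne : σx ≠ [] := by
    intro h
    rw [h] at hσx
    cases hσx
    exact hxxf rfl
  have hnpos : 1 ≤ n := le_trans (List.length_pos_iff.mpr hσxne) hlen
  by_cases h3A : ∃ e, N.Enables x e ∧ ∀ p ∈ N.parties e, x p ≠ w p
  · -- fire a fully-disagreeing enabled atom
    obtain ⟨e, he, hdis⟩ := h3A
    obtain ⟨r, y, σ', st, hσ', hlt⟩ := swap_front hd hx he hσx
    have hi' : ∀ e', N.Enables w e' → ∃ q ∈ N.parties e', y q = w q := by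
      intro e' he'
      obtain ⟨q, hq, hEq⟩ := hi e' he'
      have hqn : q ∉ N.parties e := fun hmem => hdis q hmem hEq
      exact ⟨q, hq, by rw [st.neg hqn]; exact hEq⟩
    have hii' : ∀ p, w p = ∅ → y p = ∅ := fun p hp => absurd hp (hne_w p)
    obtain ⟨σr, hσr⟩ := IH σ'.length (lt_of_lt_of_le hlt hlen) y w σ'
      (reachable_step hx st) hw hσ' le_rfl hi' hii'
    exact ⟨(e, r) :: σr, RSeq.cons st hdis hσr⟩
  · push_neg at h3A
    -- h3A : every enabled atom of x has an agreeing party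
    have h3B : ∀ e, N.Enables x e → ∃ p ∈ N.parties e, x p = w p := by
      intro e he
      obtain ⟨p, hp, hne⟩ := h3A e he
      exact ⟨p, hp, hne⟩
    by_cases h3B1 : ∃ e, N.Enables x e ∧ ∀ p ∈ N.parties e, x p = w p
    · -- pure synchronous step forces x = w
      exfalso
      obtain ⟨e, he, hpure⟩ := h3B1
      have hew : N.Enables w e := ⟨he.1, fun p hp => by
        rw [← hpure p hp]; exact he.2 p hp⟩
      obtain ⟨r, y, σ', st, hσ', hlt⟩ := swap_front hd hx he hσx
      have stw : N.StepTo w (e, r) (N.fire w (e, r)) := stepTo_fire hew st.2.1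
      have hi' : ∀ ee, N.Enables (N.fire w (e, r)) ee → ∃ q ∈ N.parties ee, y q = N.fire w (e, r) q := by
        intro ee hee
        by_cases hint : ∃ q ∈ N.parties ee, q ∈ N.parties e
        · obtain ⟨q, hq, hq'⟩ := hint
          exact ⟨q, hq, by rw [st.pos hq', stw.pos hq']⟩
        · push_neg at hint
          have heew : N.Enables w ee := ⟨hee.1, fun p hp => by
            have h2 := hee.2 p hp
            rwa [stw.neg (hint p hp)] at h2⟩
          have heene : ee ≠ e := by
            rintro rfl
            obtain ⟨p, hp⟩ := N.parties_nonempty ee hee.1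
            exact hint p hp hp
          obtain ⟨a, ha, hEa⟩ := hi ee heew
          have hwa : w a = {ee} := enab_pos hd hw heew ha
          have hxa : x a = {ee} := by rw [hEa, hwa]
          have han : a ∉ N.parties e := by
            intro hmem
            have h2 := he.2 a hmem
            rw [hxa] at h2
            exact heene (Finset.mem_singleton.mp h2).symm
          exact ⟨a, ha, by rw [st.neg han, stw.neg han, hxa, hwa]⟩
      have hii' : ∀ p, N.fire w (e, r) p = ∅ → y p = ∅ := by
        intro p hp
        by_cases hmem : p ∈ N.parties e
        · rw [st.pos hmem]
          rw [stw.pos hmem] at hp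
          exact hp
        · rw [stw.neg hmem] at hp
          exact absurd hp (hne_w p)
      obtain ⟨σ₂, hσ₂⟩ := IH σ'.length (lt_of_lt_of_le hlt hlen) y (N.fire w (e, r)) σ'
        (reachable_step hx st) (reachable_step hw stw) hσ' le_rfl hi' hii'
      have hyw' : y = N.fire w (e, r) := by
        cases hσ₂ with
        | nil => rfl
        | @cons _ ym _ oj σj stj hdisj _ =>
          exfalso
          by_cases hint : ∃ q ∈ N.parties oj.1, q ∈ N.parties e
          · obtain ⟨q, hq, hq'⟩ := hint
            exact hdisj q hq (by rw [st.pos hq', stw.pos hq'])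
          · push_neg at hint
            have heex : N.Enables x oj.1 := ⟨stj.1.1, fun p hp => by
              have h2 := stj.1.2 p hp
              rwa [st.neg (hint p hp)] at h2⟩
            obtain ⟨q, hq, hEq⟩ := h3B _ heex
            have hqe : q ∉ N.parties e := hint q hq
            exact hdisj q hq (by rw [st.neg hqe, stw.neg hqe]; exact hEq)
      apply hxw
      funext p
      by_cases hmem : p ∈ N.parties e
      · exact hpure p hmem
      · rw [← st.neg hmem, hyw', stw.neg hmem]
    · -- all enabled atoms (on both sides) are mixed
      push_neg at h3B1
      by_cases h2a : ∃ σw, N.Seq w σw N.xf ∧ σw.length ≤ n - 1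
      · -- mirror argument
        exfalso
        obtain ⟨σw, hσw, hlw⟩ := h2a
        obtain ⟨sgt, hRsgt⟩ := IH (n - 1) (by omega) w x σw hw hx hσw hlw
          (fun e he => by
            obtain ⟨q, hq, hEq⟩ := h3B e he
            exact ⟨q, hq, hEq.symm⟩)
          (fun p hp => absurd hp (hne_x p))
        cases hRsgt with
        | nil => exact hxw rfl
        | @cons _ ym _ oj σj stj hdisj _ =>
          obtain ⟨q, hq, hEq⟩ := hi _ stj.1
          exact hdisj q hq hEq.symm
      · -- delayed synchronization: contradiction with h2a
        exfalso
        obtain ⟨e₀, he₀⟩ := exists_enabled hs hw hwxf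
        obtain ⟨q₀, hq₀, hEq₀⟩ := hi e₀ he₀
        have hx_q₀ : x q₀ = {e₀} := by rw [hEq₀, enab_pos hd hw he₀ hq₀]
        obtain ⟨o₀, ho₀mem, ho₀⟩ := must_fire hσx hx_q₀
        obtain ⟨π, es, rs, ρ, zs, z1, hdec, hπ, hst, hρ, hQe, hπno⟩ :=
          seq_split hσx ⟨o₀, ho₀mem, ho₀ ▸ he₀⟩
        have hπne : π ≠ [] := by
          rintro rfl
          cases hπ
          obtain ⟨p, hp, hnep⟩ := h3B1 es hst.1
          refine hnep ?_
          rw [enab_pos hd hw hQe hp]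
          exact enab_pos hd hx hst.1 hp
        have hreach_zs : N.Reachable zs := reachable_seq hx hπ
        have hreach_z1 : N.Reachable z1 := reachable_step hreach_zs hst
        have hst_w : N.StepTo w (es, rs) (N.fire w (es, rs)) := stepTo_fire hQe hst.2.1
        have hreach_w1 : N.Reachable (N.fire w (es, rs)) := reachable_step hw hst_w
        have hi1 : ∀ ee, N.Enables (N.fire w (es, rs)) ee →
            ∃ q ∈ N.parties ee, z1 q = N.fire w (es, rs) q := by
          intro ee hee
          by_cases hint : ∃ q ∈ N.parties ee, q ∈ N.parties es
          · obtain ⟨q, hq, hq'⟩ := hint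
            exact ⟨q, hq, by rw [hst.pos hq', hst_w.pos hq']⟩
          · push_neg at hint
            have heew : N.Enables w ee := ⟨hee.1, fun p hp => by
              have h2 := hee.2 p hp
              rwa [hst_w.neg (hint p hp)] at h2⟩
            have heene : ee ≠ es := by
              rintro rfl
              obtain ⟨p, hp⟩ := N.parties_nonempty ee hee.1
              exact hint p hp hp
            obtain ⟨a, ha, hEa⟩ := hi ee heew
            have hwa : w a = {ee} := enab_pos hd hw heew ha
            have hxa : x a = {ee} := by rw [hEa, hwa]
            have hzsa : zs a = {ee} := by
              refine freeze_agent hπ (fun o ho h1 => hπno o ho ?_) hxa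
              rw [h1]; exact heew
            have han : a ∉ N.parties es := by
              intro hmem
              have h2 := hst.1.2 a hmem
              rw [hzsa] at h2
              exact heene (Finset.mem_singleton.mp h2).symm
            exact ⟨a, ha, by rw [hst.neg han, hst_w.neg han, hzsa, hwa]⟩
        have hii1 : ∀ p, N.fire w (es, rs) p = ∅ → z1 p = ∅ := by
          intro p hp
          by_cases hmem : p ∈ N.parties es
          · rw [hst.pos hmem]
            rw [hst_w.pos hmem] at hp
            exact hp
          · rw [hst_w.neg hmem] at hp
            exact absurd hp (hne_w p)
        have hlen_dec : π.length + 1 + ρ.length = σx.length := by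
          rw [hdec]; simp only [List.length_append, List.length_cons]; omega
        have hπpos : 1 ≤ π.length := List.length_pos_iff.mpr hπne
        -- the inner loop
        have LOOP : ∀ m, ∀ u σu, N.Reachable u → N.Seq u σu N.xf → σu.length ≤ m → m < n →
            (∀ ee, N.Enables (N.fire w (es, rs)) ee → ∃ q ∈ N.parties ee, u q = N.fire w (es, rs) q) →
            (∀ p, N.fire w (es, rs) p = ∅ → u p = ∅) →
            ∃ σw1, N.Seq (N.fire w (es, rs)) σw1 N.xf ∧ σw1.length ≤ m := by
          intro m
          induction m with
          | zero =>
            intro u σu hu hσu hl _ hiu hiiu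
            have hσu0 : σu = [] := List.length_eq_zero_iff.mp (Nat.le_zero.mp hl)
            rw [hσu0] at hσu
            have hu_xf : u = N.xf := by cases hσu; rfl
            have hw1_xf : N.fire w (es, rs) = N.xf := by
              by_contra h
              obtain ⟨ee, hee⟩ := exists_enabled hs hreach_w1 h
              obtain ⟨q, hq, hEq⟩ := hiu ee hee
              have hmem : ee ∈ N.fire w (es, rs) q := hee.2 q hq
              rw [← hEq, hu_xf] at hmem
              exact absurd hmem (Finset.notMem_empty _)
            exact ⟨[], by rw [hw1_xf]; exact Seq.nil _, by simp⟩
          | succ m IHm =>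
            intro u σu hu hσu hl hmn hiu hiiu
            by_cases huw : u = N.fire w (es, rs)
            · exact ⟨σu, by rw [← huw]; exact hσu, hl⟩
            · obtain ⟨σ_u, hRσ⟩ := IH (m + 1) hmn u (N.fire w (es, rs)) σu hu hreach_w1 hσu hl hiu hiiu
              cases hRσ with
              | nil => exact absurd rfl huw
              | @cons _ ym _ oj σj stj hdisj _ =>
                obtain ⟨rr, y, σ'', sty, hσ'', hlt⟩ := swap_front hd hu stj.1 hσu
                have hiy : ∀ ee, N.Enables (N.fire w (es, rs)) ee →
                    ∃ q ∈ N.parties ee, y q = N.fire w (es, rs) q := by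
                  intro ee hee
                  obtain ⟨q, hq, hEq⟩ := hiu ee hee
                  have hqn : q ∉ N.parties oj.1 := fun hmem => hdisj q hmem hEq
                  exact ⟨q, hq, by rw [sty.neg hqn]; exact hEq⟩
                have hiiy : ∀ p, N.fire w (es, rs) p = ∅ → y p = ∅ := by
                  intro p hp
                  have hup := hiiu p hp
                  have hpn : p ∉ N.parties oj.1 := by
                    intro hmem
                    have h2 := stj.1.2 p hmem
                    rw [hup] at h2
                    exact absurd h2 (Finset.notMem_empty _)
                  rw [sty.neg hpn]; exact hup
                obtain ⟨σw1, h1, h2⟩ := IHm y σ'' (reachable_step hu sty) hσ''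
                  (by omega) (by omega) hiy hiiy
                exact ⟨σw1, h1, by omega⟩
        have hρn : ρ.length < n := by omega
        obtain ⟨σw1, hσw1, hlw1⟩ := LOOP ρ.length z1 ρ hreach_z1 hρ le_rfl hρn hi1 hii1
        exact h2a ⟨(es, rs) :: σw1, Seq.cons hst_w hσw1, by simp; omega⟩
-- ===================== end auxiliary development =====================

/-- If `B, C` partition the agents, `x1, x2` are reachable markings agreeing on `B`, and
every atom enabled at `x1` or `x2` has a party in `B` and a party in `C`, then `x1` and
`x2` agree on `C` as well, i.e. they are equal. -/
theorem statement18 (N : Negotiation Agent Atom Res) (hs : N.Sound) (hd : N.Deterministic)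
    (B C : Finset Agent) (hBC : B ∪ C = Finset.univ) (hdisj : Disjoint B C)
    (x1 x2 : Marking Agent Atom) (h1 : N.Reachable x1) (h2 : N.Reachable x2)
    (hB : ∀ p ∈ B, x1 p = x2 p)
    (hen : ∀ n : Atom, N.Enables x1 n ∨ N.Enables x2 n →
      (∃ p ∈ B, p ∈ N.parties n) ∧ ∃ p ∈ C, p ∈ N.parties n) :
    (∀ p ∈ C, x1 p = x2 p) ∧ x1 = x2 := by
  have hEq : x1 = x2 := by
    by_cases h2f : x2 = N.xf
    · -- then x1 = xf as well
      have h1f : x1 = N.xf := by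
        by_contra h1f
        obtain ⟨e, he⟩ := exists_enabled hs h1 h1f
        obtain ⟨⟨b, hb, hbp⟩, -⟩ := hen e (Or.inl he)
        have hmem : e ∈ x1 b := he.2 b hbp
        rw [hB b hb, h2f] at hmem
        exact absurd hmem (Finset.notMem_empty _)
      rw [h1f, h2f]
    · obtain ⟨σx, hσx⟩ := hs.2 x1 h1
      have hne2 : ∀ p, x2 p ≠ ∅ := (reachable_ne h2).resolve_left h2f
      obtain ⟨σ, hRσ⟩ := key hs hd σx.length x1 x2 σx h1 h2 hσx le_rfl
        (fun e he => by
          obtain ⟨⟨b, hb, hbp⟩, -⟩ := hen e (Or.inr he)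
          exact ⟨b, hbp, hB b hb⟩)
        (fun p hp => absurd hp (hne2 p))
      cases hRσ with
      | nil => rfl
      | cons stj hdisj _ =>
        exfalso
        obtain ⟨⟨b, hb, hbp⟩, -⟩ := hen _ (Or.inl stj.1)
        exact hdisj b hbp (hB b hb)
  exact ⟨fun p _ => by rw [hEq], hEq⟩

end Negotiation
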